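/- Let A be an associative ℂ-algebra, let δ₁, …, δ_k be pairwise commuting derivations of A, and let τ₀ : A → ℂ be a linear functional satisfying τ₀(ab) = τ₀(ba) for all a, b ∈ A and τ₀(δᵢ(a)) = 0 for all a ∈ A and 1 ≤ i ≤ k. Define τ(a₀, a₁, …, a_k) = (1/k!) Σ_{α ∈ S_k} sign(α) τ₀(a₀ · δ_{α(1)}(a₁) ⋯ δ_{α(k)}(a_k)). Then τ satisfies the cyclicity condition τ(a_k, a₀, …, a_{k−1}) = (−1)^k τ(a₀, a₁, …, a_k) for all a₀, …, a_k ∈ A. -/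

import Mathlib

noncomputable section

/-- The cyclic `k`-cochain
`τ(a₀, …, a_k) = (1/k!) Σ_{α ∈ S_k} sign(α) τ₀(a₀ · δ_{α(1)}(a₁) ⋯ δ_{α(k)}(a_k))`
associated to a functional `τ₀` and derivations `δ₁, …, δ_k`. -/
def tauCyc {A : Type*} [Ring A] [Algebra ℂ A] {k : ℕ}
    (τ₀ : A →ₗ[ℂ] ℂ) (δ : Fin k → A →ₗ[ℂ] A) (a : Fin (k + 1) → A) : ℂ :=
  (k.factorial : ℂ)⁻¹ *
    ∑ α : Equiv.Perm (Fin k),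
      ((Equiv.Perm.sign α : ℤ) : ℂ) *
        τ₀ (a 0 * (List.ofFn fun i : Fin k => (δ (α i)) (a i.succ)).prod)

/-- if `δ₁, …, δ_k` are pairwise commuting derivations of an associative
`ℂ`-algebra `A` and `τ₀` is a trace vanishing on the images of the `δᵢ`, then the
cochain `τ` satisfies the cyclicity condition
`τ(a_k, a₀, …, a_{k−1}) = (−1)^k τ(a₀, a₁, …, a_k)`. -/
lemma leibniz_ofFn {A : Type*} [Ring A] [Algebra ℂ A] (d : A →ₗ[ℂ] A)
    (hd : ∀ a b : A, d (a * b) = d a * b + a * d b) :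
    ∀ (n : ℕ) (f : Fin n → A),
      d (List.ofFn f).prod
        = ∑ j : Fin n, (List.ofFn (Function.update f j (d (f j)))).prod := by
  intro n
  induction n with
  | zero =>
      intro f
      have h1 : d 1 = 0 := by
        have := hd 1 1
        simpa using this.symm
      simp [h1]
  | succ n ih =>
      intro f
      rw [List.ofFn_succ, List.prod_cons, hd, ih (fun i => f i.succ), Fin.sum_univ_succ,
        Finset.mul_sum]
      congr 1
      · rw [List.ofFn_succ, List.prod_cons]
        have e1 : (fun i : Fin n => Function.update f 0 (d (f 0)) i.succ) = fun i => f i.succ := by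
          funext i; rw [Function.update_of_ne (Fin.succ_ne_zero i)]
        rw [e1, Function.update_self]
      · apply Finset.sum_congr rfl
        intro j _
        rw [List.ofFn_succ, List.prod_cons, Function.update_of_ne (Fin.succ_ne_zero j).symm]
        have e2 : (fun i : Fin n => Function.update f j.succ (d (f j.succ)) i.succ)
            = Function.update (fun i => f i.succ) j (d (f j.succ)) := by
          funext i
          by_cases h : i = j
          · subst h; simp
          · rw [Function.update_of_ne h,
              Function.update_of_ne (fun hh => h (Fin.succ_injective n hh))]
        rw [e2]

lemma sum_sign_cancel {n : ℕ} (g : Equiv.Perm (Fin n) → ℂ) (σ : Equiv.Perm (Fin n))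
    (hσ : Equiv.Perm.sign σ = -1) (hg : ∀ α, g (α * σ) = g α) :
    ∑ α, ((Equiv.Perm.sign α : ℤ) : ℂ) * g α = 0 := by
  have h : (∑ α, ((Equiv.Perm.sign α : ℤ) : ℂ) * g α)
      = ∑ α, -(((Equiv.Perm.sign α : ℤ) : ℂ) * g α) := by
    refine Fintype.sum_equiv (Equiv.mulRight σ) _ _ ?_
    intro α
    simp only [Equiv.coe_mulRight, hg]
    rw [Equiv.Perm.sign_mul, hσ]
    push_cast
    ring
  rw [Finset.sum_neg_distrib] at h
  have := add_self_eq_zero.mp (by linear_combination h)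
  exact this


theorem tauCyc_cyclic {A : Type*} [Ring A] [Algebra ℂ A] {k : ℕ}
    (δ : Fin k → A →ₗ[ℂ] A)
    (hder : ∀ i (a b : A), δ i (a * b) = δ i a * b + a * δ i b)
    (hcomm : ∀ i j (a : A), δ i (δ j a) = δ j (δ i a))
    (τ₀ : A →ₗ[ℂ] ℂ)
    (htr : ∀ a b : A, τ₀ (a * b) = τ₀ (b * a))
    (hvan : ∀ i (a : A), τ₀ (δ i a) = 0)
    (a : Fin (k + 1) → A) :
    tauCyc τ₀ δ (fun i => a (i - 1)) = (-1 : ℂ) ^ k * tauCyc τ₀ δ a := by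
  cases k with
  | zero =>
      have : ∀ i : Fin 1, i - 1 = i := by decide
      simp [this]
  | succ m =>
      set L : Fin (m + 1) := Fin.last m with hL
      set c : Equiv.Perm (Fin (m + 1)) := (finRotate (m + 1))⁻¹ with hc
      -- basic Fin facts
      have h0 : (0 : Fin (m + 2)) - 1 = Fin.last (m + 1) := by
        ext; simp [Fin.sub_def, Fin.last]
      have h1 : ∀ i : Fin (m + 1), (i.succ : Fin (m + 2)) - 1 = i.castSucc := by
        intro i; rw [← Fin.coeSucc_eq_succ, add_sub_cancel_right]
      have hc0 : c 0 = L := by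
        simp [hc, hL, Equiv.Perm.inv_eq_iff_eq]
        ext; simp [Fin.coe_neg_one]
      have hcs : ∀ i : Fin m, c i.succ = i.castSucc := by
        intro i
        rw [hc, Equiv.Perm.inv_eq_iff_eq]
        simp [finRotate_succ_apply, Fin.coeSucc_eq_succ]
      have hcsign : ((Equiv.Perm.sign c : ℤ) : ℂ) = (-1 : ℂ) ^ m := by
        rw [hc, Equiv.Perm.sign_inv, sign_finRotate]
        push_cast
        ring
      -- the middle product
      set Mf : Equiv.Perm (Fin (m + 1)) → Fin m → A :=
        fun α i => δ (α i.castSucc) (a i.castSucc.succ) with hMf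
      -- per-α expansion of the vanishing term
      have expand : ∀ α : Equiv.Perm (Fin (m + 1)),
          τ₀ (δ (α L) (a (Fin.last (m + 1)) * (a 0 * (List.ofFn (Mf α)).prod)))
          = τ₀ (a 0 * (List.ofFn fun i : Fin (m + 1) => δ (α i) (a i.succ)).prod)
            + τ₀ (a (Fin.last (m + 1)) *
                (List.ofFn fun i : Fin (m + 1) => δ ((α * c) i) (a i.castSucc)).prod)
            + ∑ j : Fin m, τ₀ (a (Fin.last (m + 1)) *
                (a 0 * (List.ofFn (Function.update (Mf α) j (δ (α L) (Mf α j)))).prod)) := by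
        intro α
        rw [hder, hder, mul_add, map_add, map_add, ← add_assoc]
        congr 1
        · congr 1
          -- first term
          · rw [htr, mul_assoc]
            congr 1
            rw [List.ofFn_succ']
            simp only [List.prod_concat, Fin.succ_last]
            rfl
          -- second term
          · congr 2
            rw [List.ofFn_succ]
            simp only [List.prod_cons, Equiv.Perm.mul_apply, hcs, Fin.castSucc_zero, hc0]
            simp only [← Fin.succ_castSucc]
            rfl
        -- third term
        · rw [leibniz_ofFn (δ (α L)) (hder (α L)) m (Mf α), Finset.mul_sum, Finset.mul_sum,
            map_sum]
      -- the vanishing sum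
      have H : (0 : ℂ) = ∑ α : Equiv.Perm (Fin (m + 1)),
          ((Equiv.Perm.sign α : ℤ) : ℂ) *
            τ₀ (δ (α L) (a (Fin.last (m + 1)) * (a 0 * (List.ofFn (Mf α)).prod))) := by
        simp [hvan]
      simp only [expand, mul_add, Finset.sum_add_distrib] at H
      -- the third block of H vanishes
      have H3 : ∑ α : Equiv.Perm (Fin (m + 1)), ((Equiv.Perm.sign α : ℤ) : ℂ) *
          ∑ j : Fin m, τ₀ (a (Fin.last (m + 1)) *
              (a 0 * (List.ofFn (Function.update (Mf α) j (δ (α L) (Mf α j)))).prod))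
          = 0 := by
        simp only [Finset.mul_sum]
        rw [Finset.sum_comm]
        refine Finset.sum_eq_zero fun j _ => ?_
        refine sum_sign_cancel _ (Equiv.swap j.castSucc L)
          (Equiv.Perm.sign_swap (Fin.castSucc_lt_last j).ne) fun α => ?_
        have hup : Function.update (Mf (α * Equiv.swap j.castSucc L)) j
              (δ ((α * Equiv.swap j.castSucc L) L) (Mf (α * Equiv.swap j.castSucc L) j))
            = Function.update (Mf α) j (δ (α L) (Mf α j)) := by
          funext i
          by_cases h : i = j
          · subst h
            simp only [Function.update_self, hMf, Equiv.Perm.mul_apply,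
              Equiv.swap_apply_left, Equiv.swap_apply_right]
            exact (hcomm _ _ _).symm
          · rw [Function.update_of_ne h, Function.update_of_ne h]
            simp only [hMf, Equiv.Perm.mul_apply]
            rw [Equiv.swap_apply_of_ne_of_ne
              (fun hh => h (Fin.castSucc_injective _ hh)) (Fin.castSucc_lt_last i).ne]
        rw [hup]
      rw [H3, add_zero] at H
      -- the second block is (-1)^m times the LHS sum
      have H2 : ∑ α : Equiv.Perm (Fin (m + 1)), ((Equiv.Perm.sign α : ℤ) : ℂ) *
          τ₀ (a (Fin.last (m + 1)) *
            (List.ofFn fun i : Fin (m + 1) => δ ((α * c) i) (a i.castSucc)).prod)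
          = (-1 : ℂ) ^ m * ∑ β : Equiv.Perm (Fin (m + 1)),
              ((Equiv.Perm.sign β : ℤ) : ℂ) *
                τ₀ (a (Fin.last (m + 1)) *
                  (List.ofFn fun i : Fin (m + 1) => δ (β i) (a i.castSucc)).prod) := by
        rw [Finset.mul_sum]
        refine Fintype.sum_equiv (Equiv.mulRight c) _ _ fun α => ?_
        simp only [Equiv.coe_mulRight]
        have hs : ((Equiv.Perm.sign (α * c) : ℤ) : ℂ)
            = ((Equiv.Perm.sign α : ℤ) : ℂ) * (-1 : ℂ) ^ m := by
          rw [Equiv.Perm.sign_mul]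
          push_cast
          rw [hcsign]
        have he : ((-1 : ℂ) ^ m) * ((-1 : ℂ) ^ m) = 1 := by
          rw [← pow_add, Even.neg_one_pow ⟨m, rfl⟩]
        rw [hs]
        linear_combination (-(((Equiv.Perm.sign α : ℤ) : ℂ) *
          τ₀ (a (Fin.last (m + 1)) *
            (List.ofFn fun i : Fin (m + 1) => δ ((α * c) i) (a i.castSucc)).prod))) * he
      rw [H2] at H
      have he : ((-1 : ℂ) ^ m) * ((-1 : ℂ) ^ m) = 1 := by
        rw [← pow_add, Even.neg_one_pow ⟨m, rfl⟩]
      simp only [tauCyc, h0, h1]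
      set SR : ℂ := ∑ α : Equiv.Perm (Fin (m + 1)),
          ((Equiv.Perm.sign α : ℤ) : ℂ) *
            τ₀ (a 0 * (List.ofFn fun i : Fin (m + 1) => δ (α i) (a i.succ)).prod) with hSR
      set SL : ℂ := ∑ α : Equiv.Perm (Fin (m + 1)),
          ((Equiv.Perm.sign α : ℤ) : ℂ) *
            τ₀ (a (Fin.last (m + 1)) *
              (List.ofFn fun i : Fin (m + 1) => δ (α i) (a i.castSucc)).prod) with hSL
      rw [pow_succ]
      linear_combination ((-1 : ℂ) ^ m * (((m + 1).factorial : ℂ))⁻¹) * H.symm +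
        (-((((m + 1).factorial : ℂ))⁻¹ * SL)) * he


end
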